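/- Let H be a feasible solution to a Monotonic Single-Source k-DTSN instance with root a and demands (a, b_i, t_i) for i = 1,...,k, where t_1 ≤ ... ≤ t_k. Then there exists a subgraph T ⊆ H that is a directed tree rooted at a, is still feasible, has cost at most the cost of H, and has the property that along every root-to-target path in T the earliest necessary times of the edges are non-decreasing. -/

import Mathlib

/-- Directed temporal satisfaction: a directed `a → b` path in `H` all of whose
edges lie in the frame `Et`. -/
def dSat {V : Type*} (Et : Set (V × V)) (H : Finset (V × V)) (a b : V) : Prop :=
  Relation.ReflTransGen (fun u v => (u, v) ∈ H ∧ (u, v) ∈ Et) a b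

/-- Earliest necessary time of an edge `e` of a feasible solution `H` of a
single-source k-DTSN instance: the minimum `t i` such that removing `e` from `H`
would leave demand `(a, b i, t i)` unsatisfied. -/
noncomputable def entTime {V : Type*} [DecidableEq V] {k : ℕ}
    (E : ℕ → Set (V × V)) (a : V) (b : Fin k → V) (t : Fin k → ℕ)
    (H : Finset (V × V)) (e : V × V) : ℕ :=
  sInf {n | ∃ i, t i = n ∧ ¬ dSat (E (t i)) (H.erase e) a (b i)}

section Aux

variable {V : Type*} [DecidableEq V]

/-- Plain reachability in an edge set. -/
def Rch (S : Finset (V × V)) (a z : V) : Prop :=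
  Relation.ReflTransGen (fun u v => (u, v) ∈ S) a z

/-- Arborescence rooted at `a`. -/
def Arbor (S : Finset (V × V)) (a : V) : Prop :=
  (∀ v : V, (S.filter (fun e => e.2 = v)).card ≤ 1) ∧
  (∀ e ∈ S, Rch S a e.1 ∧ e.2 ≠ a)

omit [DecidableEq V] in
lemma rch_filter (S : Finset (V × V)) (a z : V)
    [DecidablePred (fun e : V × V => Rch S a e.1)]
    (h : Rch S a z) : Rch (S.filter (fun e => Rch S a e.1)) a z := by
  unfold Rch at *
  induction h with
  | refl => exact .refl
  | @tail c z h1 h2 ih =>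
    exact ih.tail (Finset.mem_filter.mpr ⟨h2, h1⟩)

omit [DecidableEq V] in
lemma dSat_filter (Et : Set (V × V)) (S : Finset (V × V)) (a z : V)
    [DecidablePred (fun e : V × V => Rch S a e.1)]
    (h : dSat Et S a z) : dSat Et (S.filter (fun e => Rch S a e.1)) a z := by
  unfold dSat at *
  induction h with
  | refl => exact .refl
  | @tail c z h1 h2 ih =>
    refine ih.tail ⟨Finset.mem_filter.mpr ⟨h2.1, ?_⟩, h2.2⟩
    exact Relation.ReflTransGen.mono (fun u v hv => hv.1) _ _ h1

/-- Extension lemma: an arborescence whose edges lie in `Et ∩ H` can be extended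
within `H ∩ Et` to reach any vertex reachable from `a` in `H ∩ Et`. -/
lemma ext_lemma (H T : Finset (V × V)) (Et : Set (V × V)) (a z : V)
    (hTH : T ⊆ H) (hTE : ∀ e ∈ T, e ∈ Et) (hA : Arbor T a)
    (h : dSat Et H a z) :
    ∃ T', T ⊆ T' ∧ T' ⊆ H ∧ (∀ e ∈ T', e ∈ Et) ∧ Arbor T' a ∧ Rch T' a z := by
  classical
  unfold dSat at h
  induction h with
  | refl => exact ⟨T, subset_rfl, hTH, hTE, hA, .refl⟩
  | @tail c z h1 h2 ih =>
    obtain ⟨T', hTT', hT'H, hT'E, hA', hc⟩ := ih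
    by_cases hz : Rch T' a z
    · exact ⟨T', hTT', hT'H, hT'E, hA', hz⟩
    · refine ⟨insert (c, z) T', hTT'.trans (Finset.subset_insert _ _),
        Finset.insert_subset h2.1 hT'H, ?_, ⟨?_, ?_⟩, ?_⟩
      · intro e he
        rcases Finset.mem_insert.mp he with h | h
        · subst h; exact h2.2
        · exact hT'E e h
      · intro v
        by_cases hv : z = v
        · subst hv
          have hemp : T'.filter (fun e : V × V => e.2 = z) = ∅ := by
            by_contra hne
            obtain ⟨e, hef⟩ := Finset.nonempty_of_ne_empty hne
            obtain ⟨heT, he2⟩ := Finset.mem_filter.mp hef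
            have h1' : Rch T' a e.1 := (hA'.2 e heT).1
            have : Rch T' a z := by
              refine h1'.tail ?_
              have : (e.1, e.2) ∈ T' := by simpa using heT
              rwa [he2] at this
            exact hz this
          rw [Finset.filter_insert]
          simp only [if_pos rfl, hemp]
          simp
        · rw [Finset.filter_insert]
          simp only [if_neg (by simpa using hv)]
          exact hA'.1 v
      · intro e he
        rcases Finset.mem_insert.mp he with h | h
        · subst h
          constructor
          · exact Relation.ReflTransGen.mono
              (fun u v hv => Finset.mem_insert_of_mem hv) _ _ hc
          · intro hza
            exact hz (by rw [show z = a from hza]; exact .refl)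
        · obtain ⟨hr, hne⟩ := hA'.2 e h
          exact ⟨Relation.ReflTransGen.mono
            (fun u v hv => Finset.mem_insert_of_mem hv) _ _ hr, hne⟩
      · exact (Relation.ReflTransGen.mono
          (fun u v hv => Finset.mem_insert_of_mem hv) _ _ hc).tail
          (Finset.mem_insert_self _ _)

/-- Greedy construction of a feasible arborescence inside `H`. -/
lemma build {k : ℕ} (E : ℕ → Set (V × V)) (hmono : Monotone E) (a : V)
    (b : Fin k → V) (t : Fin k → ℕ) (ht : Monotone t) (H : Finset (V × V))
    (hfeas : ∀ i, dSat (E (t i)) H a (b i)) (m : ℕ) :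
    ∃ T, T ⊆ H ∧ Arbor T a ∧
      (∀ e ∈ T, ∀ j : Fin k, m ≤ j.1 + 1 → e ∈ E (t j)) ∧
      (∀ i : Fin k, i.1 < m → dSat (E (t i)) T a (b i)) := by
  induction m with
  | zero =>
    refine ⟨∅, by simp, ⟨by simp, by simp⟩, by simp, ?_⟩
    intro i hi; omega
  | succ m ih =>
    obtain ⟨T, hTH, hA, hTE, hd⟩ := ih
    by_cases hk : m < k
    · set i : Fin k := ⟨m, hk⟩ with hi
      have hTEi : ∀ e ∈ T, e ∈ E (t i) := fun e he => hTE e he i (Nat.le_succ m)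
      obtain ⟨T', h1, h2, h3, h4, h5⟩ :=
        ext_lemma H T (E (t i)) a (b i) hTH hTEi hA (hfeas i)
      refine ⟨T', h2, h4, ?_, ?_⟩
      · intro e he j hj
        have hij : i ≤ j := by
          rw [Fin.le_def]; simp only [hi]; omega
        exact hmono (ht hij) (h3 e he)
      · intro i' hi'
        rcases Nat.lt_succ_iff_lt_or_eq.mp hi' with h | h
        · exact Relation.ReflTransGen.mono
            (fun u v hv => ⟨h1 hv.1, hv.2⟩) _ _ (hd i' h)
        · have : i' = i := Fin.ext h
          subst this
          exact Relation.ReflTransGen.mono (fun u v hv => ⟨hv, h3 _ hv⟩) _ _ h5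
    · refine ⟨T, hTH, hA, fun e he j hj => hTE e he j (by omega),
        fun i hi => hd i (by omega)⟩

/-- Pruning lemma: from a feasible arborescence one can extract a feasible
arborescence in which every edge is necessary for some demand. -/
lemma prune {k : ℕ} (E : ℕ → Set (V × V)) (a : V) (b : Fin k → V)
    (t : Fin k → ℕ) :
    ∀ n (T : Finset (V × V)), T.card ≤ n → Arbor T a →
      (∀ i, dSat (E (t i)) T a (b i)) →
      ∃ T', T' ⊆ T ∧ Arbor T' a ∧ (∀ i, dSat (E (t i)) T' a (b i)) ∧
        ∀ e ∈ T', ∃ i, ¬ dSat (E (t i)) (T'.erase e) a (b i) := by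
  classical
  intro n
  induction n with
  | zero =>
    intro T hc hA hf
    have hT : T = ∅ := Finset.card_eq_zero.mp (Nat.le_zero.mp hc)
    subst hT
    exact ⟨∅, subset_rfl, hA, hf, by simp⟩
  | succ n ih =>
    intro T hc hA hf
    by_cases hall : ∀ e ∈ T, ∃ i, ¬ dSat (E (t i)) (T.erase e) a (b i)
    · exact ⟨T, subset_rfl, hA, hf, hall⟩
    · push_neg at hall
      obtain ⟨e₀, he₀, hsat⟩ := hall
      set S := T.erase e₀ with hS
      set T₁ := S.filter (fun e : V × V => Rch S a e.1) with hT₁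
      have hsubS : T₁ ⊆ S := Finset.filter_subset _ _
      have hsubT : T₁ ⊆ T := hsubS.trans (Finset.erase_subset _ _)
      have hcard : T₁.card ≤ n := by
        have h1 : T₁.card ≤ S.card := Finset.card_le_card hsubS
        have h2 : S.card = T.card - 1 := Finset.card_erase_of_mem he₀
        have h3 : 0 < T.card := Finset.card_pos.mpr ⟨e₀, he₀⟩
        omega
      have hA₁ : Arbor T₁ a := by
        constructor
        · intro v
          exact le_trans (Finset.card_le_card
            (Finset.filter_subset_filter _ hsubT)) (hA.1 v)
        · intro e he
          obtain ⟨heS, hrch⟩ := Finset.mem_filter.mp he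
          refine ⟨rch_filter S a e.1 hrch, (hA.2 e (hsubT he)).2⟩
      have hf₁ : ∀ i, dSat (E (t i)) T₁ a (b i) :=
        fun i => dSat_filter (E (t i)) S a (b i) (hsat i)
      obtain ⟨T', h1, h2, h3, h4⟩ := ih T₁ hcard hA₁ hf₁
      exact ⟨T', h1.trans hsubT, h2, h3, h4⟩

/-- Avoidance lemma: in an arborescence, any temporal walk from the root that
avoids `(u,v)` also avoids every edge out of `v`. -/
lemma avoid (T : Finset (V × V)) (a : V) (Et : Set (V × V)) (u v x z : V)
    (hdeg : ∀ w : V, (T.filter (fun e => e.2 = w)).card ≤ 1)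
    (hva : v ≠ a) (huv : (u, v) ∈ T)
    (h : Relation.ReflTransGen
      (fun p q => (p, q) ∈ T.erase (u, v) ∧ (p, q) ∈ Et) a z) :
    Relation.ReflTransGen
      (fun p q => (p, q) ∈ T.erase (v, x) ∧ (p, q) ∈ Et) a z := by
  induction h with
  | refl => exact .refl
  | @tail c z h1 h2 ih =>
    by_cases hcz : (c, z) = (v, x)
    · exfalso
      have hc : c = v := congrArg Prod.fst hcz
      subst hc
      rcases Relation.ReflTransGen.cases_tail h1 with h | ⟨d, _, hd⟩
      · exact hva h
      · have hdT : (d, c) ∈ T := Finset.mem_of_mem_erase hd.1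
        have heq : (d, c) = (u, c) := by
          have h1' : (d, c) ∈ T.filter (fun e : V × V => e.2 = c) :=
            Finset.mem_filter.mpr ⟨hdT, rfl⟩
          have h2' : (u, c) ∈ T.filter (fun e : V × V => e.2 = c) :=
            Finset.mem_filter.mpr ⟨huv, rfl⟩
          exact Finset.card_le_one.mp (hdeg c) _ h1' _ h2'
        exact Finset.ne_of_mem_erase hd.1 heq
    · exact ih.tail ⟨Finset.mem_erase.mpr
        ⟨hcz, Finset.mem_of_mem_erase h2.1⟩, h2.2⟩

end Aux

theorem stmt4 {V : Type*} [DecidableEq V] {k : ℕ}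
    (E : ℕ → Set (V × V)) (hmono : Monotone E)
    (w : V × V → ℝ) (hw : ∀ e, 0 ≤ w e)
    (a : V) (b : Fin k → V) (t : Fin k → ℕ) (ht : Monotone t)
    (H : Finset (V × V)) (hfeas : ∀ i, dSat (E (t i)) H a (b i)) :
    ∃ T : Finset (V × V),
      T ⊆ H ∧
      -- T is a directed tree (arborescence) rooted at a:
      (∀ v : V, (T.filter (fun e => e.2 = v)).card ≤ 1) ∧
      (∀ e ∈ T, Relation.ReflTransGen (fun u v => (u, v) ∈ T) a e.1 ∧ e.2 ≠ a) ∧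
      -- T is still feasible:
      (∀ i, dSat (E (t i)) T a (b i)) ∧
      -- cost at most that of H:
      (∑ e ∈ T, w e) ≤ (∑ e ∈ H, w e) ∧
      -- earliest necessary times non-decreasing along every root-to-target path:
      (∀ u v x : V, (u, v) ∈ T → (v, x) ∈ T →
        entTime E a b t T (u, v) ≤ entTime E a b t T (v, x)) := by
  classical
  obtain ⟨T₀, hT₀H, hA₀, hT₀E, hd₀⟩ := build E hmono a b t ht H hfeas k
  have hfeas₀ : ∀ i, dSat (E (t i)) T₀ a (b i) := fun i => hd₀ i i.2
  obtain ⟨T, hTT₀, hA, hfT, hnec⟩ := prune E a b t T₀.card T₀ le_rfl hA₀ hfeas₀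
  have hTH : T ⊆ H := hTT₀.trans hT₀H
  refine ⟨T, hTH, hA.1, fun e he => hA.2 e he, hfT, ?_, ?_⟩
  · exact Finset.sum_le_sum_of_subset_of_nonneg hTH (fun e _ _ => hw e)
  · intro u v x huv hvx
    obtain ⟨i, hi⟩ := hnec (v, x) hvx
    have hS2 : t i ∈ {n | ∃ j, t j = n ∧ ¬ dSat (E (t j)) (T.erase (v, x)) a (b j)} :=
      ⟨i, rfl, hi⟩
    have hsub : {n | ∃ j, t j = n ∧ ¬ dSat (E (t j)) (T.erase (v, x)) a (b j)} ⊆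
        {n | ∃ j, t j = n ∧ ¬ dSat (E (t j)) (T.erase (u, v)) a (b j)} := by
      rintro n ⟨j, hj, hnd⟩
      refine ⟨j, hj, fun hsat => hnd ?_⟩
      exact avoid T a (E (t j)) u v x (b j) hA.1 ((hA.2 _ huv).2) huv hsat
    unfold entTime
    exact Nat.sInf_le (hsub (Nat.sInf_mem ⟨_, hS2⟩))
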